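/- Let P be an orthogonal projection and U a unitary on a Hilbert space F. Then for every z in the closed unit disc, ν(P^⊥U + z U*P) ≤ 1 and ν(U*P + z P^⊥U) ≤ 1. -/

import Mathlib

open ContinuousLinearMap

noncomputable def numRadius {F : Type*} [NormedAddCommGroup F] [InnerProductSpace ℂ F]
    (A : F →L[ℂ] F) : ℝ :=
  sSup {r : ℝ | ∃ h : F, ‖h‖ = 1 ∧ r = ‖(inner ℂ (A h) h : ℂ)‖}

lemma key_aux {F : Type*} [NormedAddCommGroup F] [InnerProductSpace ℂ F] [CompleteSpace F]
    (P U : F →L[ℂ] F) (hP : IsSelfAdjoint P) (hP2 : P ∘L P = P)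
    (hU1 : adjoint U ∘L U = 1)
    (z w : ℂ) (hz : ‖z‖ ≤ 1) (hw : ‖w‖ ≤ 1) :
    numRadius (z • ((1 - P) ∘L U) + w • (adjoint U ∘L P)) ≤ 1 := by
  have hinP : ∀ x y : F, (inner ℂ (P x) y : ℂ) = inner ℂ x (P y) := fun x y => by
    conv_lhs => rw [← hP.adjoint_eq]
    exact adjoint_inner_left P y x
  have hPP : ∀ x : F, P (P x) = P x := fun x => by
    have := DFunLike.congr_fun hP2 x
    simpa using this
  have hUU : ∀ x : F, adjoint U (U x) = x := fun x => by
    have := DFunLike.congr_fun hU1 x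
    simpa using this
  have hUiso : ∀ x : F, ‖U x‖ = ‖x‖ := fun x => by
    have h1 : (inner ℂ (U x) (U x) : ℂ) = inner ℂ x x := by
      rw [← adjoint_inner_left U x (U x), hUU]
    rw [inner_self_eq_norm_sq_to_K, inner_self_eq_norm_sq_to_K] at h1
    have h2 : ‖U x‖ ^ 2 = ‖x‖ ^ 2 := by exact_mod_cast h1
    nlinarith [norm_nonneg (U x), norm_nonneg x]
  apply Real.sSup_le _ zero_le_one
  rintro r ⟨h, hh, rfl⟩
  set a : F := P (U h) with ha
  set b : F := U h - P (U h) with hb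
  set p : F := P h with hp
  set q : F := h - P h with hq
  -- Pythagoras
  have hab : (inner ℂ a b : ℂ) = 0 := by
    rw [ha, hb, hinP]
    simp [map_sub, hPP]
  have hpq : (inner ℂ p q : ℂ) = 0 := by
    rw [hp, hq, hinP]
    simp [map_sub, hPP]
  have hab2 : ‖a‖ * ‖a‖ + ‖b‖ * ‖b‖ = 1 := by
    have h1 := norm_add_sq_eq_norm_sq_add_norm_sq_of_inner_eq_zero a b hab
    have hsum : a + b = U h := by rw [ha, hb]; abel
    rw [hsum, hUiso h, hh] at h1
    linarith
  have hpq2 : ‖p‖ * ‖p‖ + ‖q‖ * ‖q‖ = 1 := by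
    have h1 := norm_add_sq_eq_norm_sq_add_norm_sq_of_inner_eq_zero p q hpq
    have hsum : p + q = h := by rw [hp, hq]; abel
    rw [hsum, hh] at h1
    linarith
  -- compute the inner ℂ product
  have happ : ((z • ((1 - P) ∘L U) + w • (adjoint U ∘L P) : F →L[ℂ] F)) h = z • b + w • (adjoint U p) := by
    simp [ha, hb, hp, sub_apply]
  have hb1 : (inner ℂ b h : ℂ) = inner ℂ b q := by
    have hPb : P b = 0 := by rw [hb]; simp [map_sub, hPP]
    have : b = b - P b := by rw [hPb]; simp
    calc (inner ℂ b h : ℂ) = inner ℂ (b - P b) h := by rw [← this]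
      _ = inner ℂ b h - inner ℂ b (P h) := by rw [inner_sub_left, hinP]
      _ = inner ℂ b q := by rw [hq, inner_sub_right]
  have hb2 : (inner ℂ (adjoint U p) h : ℂ) = inner ℂ p a := by
    calc (inner ℂ (adjoint U p) h : ℂ) = inner ℂ p (U h) := adjoint_inner_left U h p
      _ = inner ℂ (P p) (U h) := by rw [hp, hPP]
      _ = inner ℂ p a := by rw [hinP, ha]
  have hin : (inner ℂ (((z • ((1 - P) ∘L U) + w • (adjoint U ∘L P) : F →L[ℂ] F)) h) h : ℂ)
      = (starRingEnd ℂ z) * inner ℂ b q + (starRingEnd ℂ w) * inner ℂ p a := by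
    rw [happ, inner_add_left, inner_smul_left, inner_smul_left, hb1, hb2]
  rw [hin]
  calc ‖(starRingEnd ℂ z) * (inner ℂ b q : ℂ) + (starRingEnd ℂ w) * inner ℂ p a‖
      ≤ ‖(starRingEnd ℂ z) * (inner ℂ b q : ℂ)‖ + ‖(starRingEnd ℂ w) * (inner ℂ p a : ℂ)‖ :=
        norm_add_le _ _
    _ = ‖z‖ * ‖(inner ℂ b q : ℂ)‖ + ‖w‖ * ‖(inner ℂ p a : ℂ)‖ := by
        rw [norm_mul, norm_mul, RCLike.norm_conj, RCLike.norm_conj]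
    _ ≤ 1 * (‖b‖ * ‖q‖) + 1 * (‖p‖ * ‖a‖) := by
        gcongr <;> exact norm_inner_le_norm _ _
    _ ≤ 1 := by
        nlinarith [sq_nonneg (‖b‖ - ‖q‖), sq_nonneg (‖p‖ - ‖a‖)]

theorem numRadius_le_one_on_closed_disc {F : Type*} [NormedAddCommGroup F]
    [InnerProductSpace ℂ F] [CompleteSpace F]
    (P U : F →L[ℂ] F) (hP : IsSelfAdjoint P) (hP2 : P ∘L P = P)
    (hU1 : adjoint U ∘L U = 1) (hU2 : U ∘L adjoint U = 1) :
    ∀ z : ℂ, ‖z‖ ≤ 1 →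
      numRadius (((1 - P) ∘L U) + z • (adjoint U ∘L P)) ≤ 1 ∧
      numRadius ((adjoint U ∘L P) + z • ((1 - P) ∘L U)) ≤ 1 := by
  intro z hz
  constructor
  · have := key_aux P U hP hP2 hU1 1 z (by norm_num) hz
    simpa using this
  · have := key_aux P U hP hP2 hU1 z 1 hz (by norm_num)
    rw [add_comm] at this
    simpa using this
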